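/- Let n ≥ 1, d ≥ 1, and let Z^(1), …, Z^(n) be d×d Hermitian positive semidefinite complex matrices such that Id − Σ_{p=1}^n Z^(p) is positive semidefinite. Let M be the (nd)×(nd) block matrix with d×d blocks M_{pq} := δ_{pq} Z^(p) − Z^(p) Z^(q), i.e. M_{(p,i),(q,j)} = δ_{pq} Z^(p)_{ij} − (Z^(p) Z^(q))_{ij}. Then M is Hermitian positive semidefinite. Moreover, if each Z^(p) is positive definite, then M is positive definite if and only if Id − Σ_{p=1}^n Z^(p) is positive definite. -/

import Mathlib

open Finset Matrix ComplexOrder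

section Aux

variable {n d : ℕ}

private lemma sum_dotProduct' (f : Fin n → Fin d → ℂ) (w : Fin d → ℂ) :
    (∑ p, f p) ⬝ᵥ w = ∑ p, f p ⬝ᵥ w := by
  simp only [dotProduct, Finset.sum_apply, Finset.sum_mul]
  exact Finset.sum_comm

private lemma sumMat_mulVec (Z : Fin n → Matrix (Fin d) (Fin d) ℂ) (w : Fin d → ℂ) :
    (∑ p, Z p) *ᵥ w = ∑ p, Z p *ᵥ w := by
  ext i
  simp only [mulVec, dotProduct, Finset.sum_apply, Matrix.sum_apply, Finset.sum_mul]
  rw [Finset.sum_comm]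

private lemma mulVec_sum' (A : Matrix (Fin d) (Fin d) ℂ) (f : Fin n → Fin d → ℂ) :
    A *ᵥ (∑ p, f p) = ∑ p, A *ᵥ f p := by
  ext i
  simp only [mulVec, dotProduct, Finset.sum_apply, Finset.mul_sum]
  exact Finset.sum_comm

private lemma dotProduct_sum' (w : Fin d → ℂ) (f : Fin n → Fin d → ℂ) :
    w ⬝ᵥ (∑ p, f p) = ∑ p, w ⬝ᵥ f p := by
  simp only [dotProduct, Finset.sum_apply, Finset.mul_sum]
  exact Finset.sum_comm

/-- The quadratic form of the block matrix. -/
private lemma quad_eq (Z : Fin n → Matrix (Fin d) (Fin d) ℂ)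
    (hZ : ∀ p, (Z p).IsHermitian) (x : Fin n × Fin d → ℂ) :
    star x ⬝ᵥ ((Matrix.of fun pi qj : Fin n × Fin d =>
        (if pi.1 = qj.1 then Z pi.1 pi.2 qj.2 else 0)
          - (Z pi.1 * Z qj.1) pi.2 qj.2) *ᵥ x)
      = (∑ p, star (fun i => x (p, i)) ⬝ᵥ (Z p *ᵥ fun i => x (p, i)))
        - star (∑ p, Z p *ᵥ fun i => x (p, i)) ⬝ᵥ (∑ p, Z p *ᵥ fun i => x (p, i)) := by
  set y : Fin n → Fin d → ℂ := fun p i => x (p, i) with hy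
  set w : Fin d → ℂ := ∑ p, Z p *ᵥ y p with hw
  have hMx : ∀ pi : Fin n × Fin d,
      ((Matrix.of fun pi qj : Fin n × Fin d =>
        (if pi.1 = qj.1 then Z pi.1 pi.2 qj.2 else 0)
          - (Z pi.1 * Z qj.1) pi.2 qj.2) *ᵥ x) pi
      = (Z pi.1 *ᵥ y pi.1) pi.2 - (Z pi.1 *ᵥ w) pi.2 := by
    rintro ⟨p, i⟩
    have h1 : (Z p *ᵥ w) i = ∑ q, ((Z p * Z q) *ᵥ y q) i := by
      rw [hw, mulVec_sum']
      simp [Matrix.mulVec_mulVec]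
    simp only [mulVec, dotProduct, Matrix.of_apply, Fintype.sum_prod_type, sub_mul,
      Finset.sum_sub_distrib] at *
    rw [h1]
    congr 1
    rw [Finset.sum_comm]
    simp [ite_mul, Finset.sum_ite_eq', mul_comm]
    rfl
  calc star x ⬝ᵥ ((Matrix.of fun pi qj : Fin n × Fin d =>
        (if pi.1 = qj.1 then Z pi.1 pi.2 qj.2 else 0)
          - (Z pi.1 * Z qj.1) pi.2 qj.2) *ᵥ x)
      = ∑ p, (star (y p) ⬝ᵥ (Z p *ᵥ y p) - star (y p) ⬝ᵥ (Z p *ᵥ w)) := by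
        simp only [dotProduct, Fintype.sum_prod_type]
        refine Finset.sum_congr rfl fun p _ => ?_
        rw [← Finset.sum_sub_distrib]
        refine Finset.sum_congr rfl fun i _ => ?_
        rw [hMx (p, i)]
        simp only [hy, Pi.star_apply]
        ring
    _ = (∑ p, star (y p) ⬝ᵥ (Z p *ᵥ y p)) - ∑ p, star (y p) ⬝ᵥ (Z p *ᵥ w) := by
        rw [Finset.sum_sub_distrib]
    _ = (∑ p, star (y p) ⬝ᵥ (Z p *ᵥ y p)) - star w ⬝ᵥ w := by
        congr 1
        have : ∀ p, star (y p) ⬝ᵥ (Z p *ᵥ w) = star (Z p *ᵥ y p) ⬝ᵥ w := by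
          intro p
          rw [star_mulVec, ← dotProduct_mulVec, hZ p]
        simp_rw [this]
        rw [← sum_dotProduct' (fun p => star (Z p *ᵥ y p)) w, ← star_sum]

/-- Vectors as elements of Euclidean space. -/
private def vecE {n d : ℕ} (f : Fin n × Fin d → ℂ) :
    EuclideanSpace ℂ (Fin n × Fin d) := WithLp.toLp 2 f

open scoped MatrixOrder in
/-- Cauchy–Schwarz core inequality. -/
private lemma cs_core (Z : Fin n → Matrix (Fin d) (Fin d) ℂ) (hZ : ∀ p, (Z p).PosSemidef)
    (y : Fin n → Fin d → ℂ) :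
    0 ≤ (star (∑ p, Z p *ᵥ y p) ⬝ᵥ ((∑ p, Z p) *ᵥ (∑ p, Z p *ᵥ y p))).re
    ∧ 0 ≤ (∑ p, star (y p) ⬝ᵥ (Z p *ᵥ y p)).re
    ∧ (∑ p, star (y p) ⬝ᵥ (Z p *ᵥ y p)).im = 0
    ∧ (star (∑ p, Z p *ᵥ y p) ⬝ᵥ (∑ p, Z p *ᵥ y p)).re ^ 2
        ≤ (star (∑ p, Z p *ᵥ y p) ⬝ᵥ ((∑ p, Z p) *ᵥ (∑ p, Z p *ᵥ y p))).re
          * (∑ p, star (y p) ⬝ᵥ (Z p *ᵥ y p)).re := by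
  set s : Fin n → Matrix (Fin d) (Fin d) ℂ := fun p => CFC.sqrt (Z p) with hs
  have hsq : ∀ p, s p * s p = Z p := fun p => CFC.sqrt_mul_sqrt_self (Z p) (hZ p).nonneg
  have hsherm : ∀ p, (s p)ᴴ = s p := fun p => (CFC.sqrt_nonneg (Z p)).posSemidef.1
  have key : ∀ p (a b : Fin d → ℂ),
      star (s p *ᵥ a) ⬝ᵥ (s p *ᵥ b) = star a ⬝ᵥ (Z p *ᵥ b) := by
    intro p a b
    rw [star_mulVec, hsherm, ← dotProduct_mulVec, Matrix.mulVec_mulVec, hsq]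
  have euv : ∀ (a b : Fin n → Fin d → ℂ),
      (inner ℂ (vecE fun pi => (s pi.1 *ᵥ a pi.1) pi.2)
             (vecE fun pi => (s pi.1 *ᵥ b pi.1) pi.2) : ℂ)
        = ∑ p, star (a p) ⬝ᵥ (Z p *ᵥ b p) := by
    intro a b
    rw [PiLp.inner_apply, Fintype.sum_prod_type]
    refine Finset.sum_congr rfl fun p _ => ?_
    rw [← key p (a p) (b p)]
    simp [dotProduct, RCLike.inner_apply, vecE]
    exact Finset.sum_congr rfl fun _ _ => mul_comm _ _
  set u : EuclideanSpace ℂ (Fin n × Fin d) :=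
    vecE fun pi => (s pi.1 *ᵥ (∑ p, Z p *ᵥ y p)) pi.2 with hu
  set v : EuclideanSpace ℂ (Fin n × Fin d) :=
    vecE fun pi => (s pi.1 *ᵥ y pi.1) pi.2 with hv
  have huv : (inner ℂ u v : ℂ) = star (∑ p, Z p *ᵥ y p) ⬝ᵥ (∑ p, Z p *ᵥ y p) := by
    have h := euv (fun _ => ∑ p, Z p *ᵥ y p) y
    rw [← dotProduct_sum'] at h
    exact h
  have huu : (inner ℂ u u : ℂ)
      = star (∑ p, Z p *ᵥ y p) ⬝ᵥ ((∑ p, Z p) *ᵥ (∑ p, Z p *ᵥ y p)) := by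
    have h := euv (fun _ => ∑ p, Z p *ᵥ y p) (fun _ => ∑ p, Z p *ᵥ y p)
    rw [← dotProduct_sum', ← sumMat_mulVec] at h
    exact h
  have hvv : (inner ℂ v v : ℂ) = ∑ p, star (y p) ⬝ᵥ (Z p *ᵥ y p) := euv y y
  have hbre : (star (∑ p, Z p *ᵥ y p) ⬝ᵥ ((∑ p, Z p) *ᵥ (∑ p, Z p *ᵥ y p))).re
      = ‖u‖ ^ 2 := by
    rw [← huu, ← RCLike.re_to_complex]
    exact inner_self_eq_norm_sq (𝕜 := ℂ) u
  have hTre : (∑ p, star (y p) ⬝ᵥ (Z p *ᵥ y p)).re = ‖v‖ ^ 2 := by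
    rw [← hvv, ← RCLike.re_to_complex]
    exact inner_self_eq_norm_sq (𝕜 := ℂ) v
  have hTim : (∑ p, star (y p) ⬝ᵥ (Z p *ᵥ y p)).im = 0 := by
    rw [← hvv, ← RCLike.im_to_complex]
    exact inner_self_im (𝕜 := ℂ) v
  have ha := dotProduct_star_self_nonneg (∑ p, Z p *ᵥ y p)
  rw [Complex.nonneg_iff] at ha
  have hanorm : ‖(inner ℂ u v : ℂ)‖ = (star (∑ p, Z p *ᵥ y p) ⬝ᵥ (∑ p, Z p *ᵥ y p)).re := by
    rw [huv]
    have h2 : (star (∑ p, Z p *ᵥ y p) ⬝ᵥ (∑ p, Z p *ᵥ y p))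
        = ((star (∑ p, Z p *ᵥ y p) ⬝ᵥ (∑ p, Z p *ᵥ y p)).re : ℂ) := by
      apply Complex.ext
      · rw [Complex.ofReal_re]
      · rw [Complex.ofReal_im, ← ha.2]
    rw [h2, Complex.norm_real, Real.norm_eq_abs, abs_of_nonneg ha.1, Complex.ofReal_re]
  have hcs := norm_inner_le_norm (𝕜 := ℂ) u v
  rw [hanorm] at hcs
  refine ⟨hbre ▸ sq_nonneg _, hTre ▸ sq_nonneg _, hTim, ?_⟩
  rw [hbre, hTre]
  nlinarith [norm_nonneg u, norm_nonneg v, ha.1, hcs]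

end Aux

/-- For Hermitian positive semidefinite `Z^(1),…,Z^(n)` with
`Id - Σ Z^(p)` positive semidefinite, the block matrix `M_{pq} = δ_{pq} Z^(p) - Z^(p) Z^(q)`
is Hermitian positive semidefinite; moreover, if each `Z^(p)` is positive definite, then `M`
is positive definite if and only if `Id - Σ Z^(p)` is. -/
theorem stmt_12 (n d : ℕ) (hn : 1 ≤ n) (hd : 1 ≤ d)
    (Z : Fin n → Matrix (Fin d) (Fin d) ℂ)
    (hZ : ∀ p, (Z p).PosSemidef)
    (hsum : (1 - ∑ p, Z p).PosSemidef) :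
    (Matrix.of fun pi qj : Fin n × Fin d =>
        (if pi.1 = qj.1 then Z pi.1 pi.2 qj.2 else 0)
          - (Z pi.1 * Z qj.1) pi.2 qj.2).PosSemidef
    ∧ ((∀ p, (Z p).PosDef) →
        ((Matrix.of fun pi qj : Fin n × Fin d =>
            (if pi.1 = qj.1 then Z pi.1 pi.2 qj.2 else 0)
              - (Z pi.1 * Z qj.1) pi.2 qj.2).PosDef
          ↔ (1 - ∑ p, Z p).PosDef)) := by
  classical
  have hherm : ∀ p, (Z p).IsHermitian := fun p => (hZ p).1
  have hM : (Matrix.of fun pi qj : Fin n × Fin d =>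
      (if pi.1 = qj.1 then Z pi.1 pi.2 qj.2 else 0)
        - (Z pi.1 * Z qj.1) pi.2 qj.2).IsHermitian := by
    have h2 : ∀ p q : Fin n, (Z q * Z p)ᴴ = Z p * Z q := fun p q => by
      rw [conjTranspose_mul, hherm, hherm]
    ext ⟨p, i⟩ ⟨q, j⟩
    show star ((if q = p then Z q j i else 0) - (Z q * Z p) j i)
        = (if p = q then Z p i j else 0) - (Z p * Z q) i j
    rw [star_sub]
    congr 1
    · by_cases h : p = q
      · subst h
        rw [if_pos rfl, if_pos rfl, ← conjTranspose_apply, hherm]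
      · rw [if_neg (Ne.symm h), if_neg h, star_zero]
    · rw [← conjTranspose_apply, h2]
  -- comparison from hsum : for any w, star w S w ≤ star w w
  have hba : ∀ w : Fin d → ℂ,
      star w ⬝ᵥ ((∑ p, Z p) *ᵥ w) ≤ star w ⬝ᵥ w := by
    intro w
    have h0 := hsum.dotProduct_mulVec_nonneg w
    rw [sub_mulVec, one_mulVec, dotProduct_sub] at h0
    exact sub_nonneg.mp h0
  have hPSD : (Matrix.of fun pi qj : Fin n × Fin d =>
      (if pi.1 = qj.1 then Z pi.1 pi.2 qj.2 else 0)
        - (Z pi.1 * Z qj.1) pi.2 qj.2).PosSemidef := by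
    refine PosSemidef.of_dotProduct_mulVec_nonneg hM fun x => ?_
    rw [quad_eq Z hherm x]
    set y : Fin n → Fin d → ℂ := fun p i => x (p, i) with hy
    set w : Fin d → ℂ := ∑ p, Z p *ᵥ y p with hw
    obtain ⟨hb0, hT0, hTim, hKey⟩ := cs_core Z hZ y
    have hble := hba w
    rw [Complex.le_def] at hble
    have ha := dotProduct_star_self_nonneg w
    rw [Complex.nonneg_iff] at ha
    rw [Complex.nonneg_iff]
    constructor
    · simp only [Complex.sub_re]
      nlinarith [hKey, hble.1, ha.1, hb0, hT0]
    · rw [Complex.sub_im, hTim, ← ha.2]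
      ring
  refine ⟨hPSD, fun hZd => ⟨fun hMpd => ?_, fun hpos => ?_⟩⟩
  · -- M posdef → 1 - S posdef
    refine PosDef.of_dotProduct_mulVec_pos hsum.1 fun v hv => ?_
    rcases lt_or_eq_of_le (hsum.dotProduct_mulVec_nonneg v) with h | h
    · exact h
    exfalso
    have hker : (1 - ∑ p, Z p) *ᵥ v = 0 := (hsum.dotProduct_mulVec_zero_iff v).1 h.symm
    have hSv : (∑ p, Z p) *ᵥ v = v := by
      rw [sub_mulVec, one_mulVec, sub_eq_zero] at hker
      exact hker.symm
    set x : Fin n × Fin d → ℂ := fun pi => v pi.2 with hx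
    have hx0 : x ≠ 0 := by
      intro h0
      apply hv
      ext i
      exact congrFun h0 (⟨0, hn⟩, i)
    have hlt := hMpd.dotProduct_mulVec_pos hx0
    rw [quad_eq Z hherm x] at hlt
    have hwv : (∑ p, Z p *ᵥ fun i => x (p, i)) = v := by
      have h1 : (∑ p, Z p *ᵥ fun i => x (p, i)) = ∑ p, Z p *ᵥ v := rfl
      rw [h1, ← sumMat_mulVec, hSv]
    have hTv : (∑ p, star (fun i => x (p, i)) ⬝ᵥ (Z p *ᵥ fun i => x (p, i)))
        = star v ⬝ᵥ v := by
      have h1 : (∑ p, star (fun i => x (p, i)) ⬝ᵥ (Z p *ᵥ fun i => x (p, i)))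
          = ∑ p, star v ⬝ᵥ (Z p *ᵥ v) := rfl
      rw [h1, ← dotProduct_sum', ← sumMat_mulVec, hSv]
    rw [hwv, hTv, sub_self] at hlt
    exact lt_irrefl 0 hlt
  · -- 1 - S posdef → M posdef
    refine PosDef.of_dotProduct_mulVec_pos hM fun x hx => ?_
    rw [quad_eq Z hherm x]
    set y : Fin n → Fin d → ℂ := fun p i => x (p, i) with hy
    set w : Fin d → ℂ := ∑ p, Z p *ᵥ y p with hw
    by_cases hw0 : w = 0
    · rw [hw0]
      simp only [star_zero, dotProduct_zero, zero_dotProduct, sub_zero]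
      obtain ⟨pi, hpi⟩ := Function.ne_iff.mp hx
      refine Finset.sum_pos' (fun p _ => (hZ p).dotProduct_mulVec_nonneg _)
        ⟨pi.1, Finset.mem_univ _, (hZd pi.1).dotProduct_mulVec_pos (x := y pi.1) ?_⟩
      intro h0
      exact hpi (congrFun h0 pi.2)
    · obtain ⟨hb0, hT0, hTim, hKey⟩ := cs_core Z hZ y
      have ha : (0 : ℂ) < star w ⬝ᵥ w := by
        refine lt_of_le_of_ne (dotProduct_star_self_nonneg w) fun h => ?_
        exact hw0 (dotProduct_star_self_eq_zero.mp h.symm)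
      rw [Complex.pos_iff] at ha
      have hblt : star w ⬝ᵥ ((∑ p, Z p) *ᵥ w) < star w ⬝ᵥ w := by
        have h0 := hpos.dotProduct_mulVec_pos hw0
        rw [sub_mulVec, one_mulVec, dotProduct_sub] at h0
        exact sub_pos.mp h0
      rw [Complex.lt_def] at hblt
      rw [Complex.pos_iff]
      constructor
      · simp only [Complex.sub_re]
        nlinarith [hKey, hblt.1, ha.1, hb0, hT0]
      · rw [Complex.sub_im, hTim, ← ha.2]
        ring
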